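/- Let d ≥ 2 be a natural number and 1 < α < 2 a real number. Then ν_SV < ν⋆, i.e. (2^{α+2}/(d−α)) (Γ((d+α)/4)/Γ((d−α)/4))² < 2^{α−1} Γ(α/2) Γ(d/2) / Γ((d−α)/2). -/

import Mathlib

open Filter Finset

/-- Per-factor polynomial identity. -/
lemma fac_id (a s u : ℝ) :
    (s + u) * (2 * a + s + u) * (a + 1 + u) ^ 2
      + a ^ 2 * (1 - s) * (1 + s + 2 * a + 2 * u)
    = (1 + u) * (2 * a + 1 + u) * (a + s + u) ^ 2 := by ring

lemma keyA (a s : ℝ) (ha : 0 < a) (hs0 : 0 < s) (hs1 : s < 1) :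
    Real.Gamma (a + s) ^ 2 * Real.Gamma (2 * a + 1) <
      Real.Gamma s * Real.Gamma (2 * a + s) * Real.Gamma (a + 1) ^ 2 := by
  -- per-factor functions
  set f : ℕ → ℝ := fun j => (s + j) * (2 * a + s + j) * (a + 1 + j) ^ 2 with hf
  set g : ℕ → ℝ := fun j => (1 + j) * (2 * a + 1 + j) * (a + s + j) ^ 2 with hg
  have hfpos : ∀ j : ℕ, 0 < f j := by
    intro j
    have : (0:ℝ) ≤ j := Nat.cast_nonneg j
    simp only [hf]
    positivity
  have hfg : ∀ j : ℕ, f j ≤ g j := by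
    intro j
    have hj : (0:ℝ) ≤ j := Nat.cast_nonneg j
    simp only [hf, hg]
    rw [← fac_id a s (j:ℝ)]
    have : 0 ≤ a ^ 2 * (1 - s) * (1 + s + 2 * a + 2 * (j:ℝ)) :=
      mul_nonneg (mul_nonneg (sq_nonneg a) (by linarith)) (by positivity)
    linarith
  set r0 : ℝ := g 0 / f 0 with hr0
  have hf0g0 : f 0 < g 0 := by
    simp only [hf, hg]
    push_cast
    rw [← fac_id a s 0]
    have : 0 < a ^ 2 * (1 - s) * (1 + s + 2 * a + 2 * 0) :=
      mul_pos (mul_pos (by positivity) (by linarith)) (by positivity)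
    linarith
  have hr0gt : 1 < r0 := by
    rw [hr0, lt_div_iff₀ (hfpos 0)]
    linarith [hf0g0]
  -- partial product inequality
  have hprod : ∀ n : ℕ,
      r0 * ∏ j ∈ range (n+1), f j ≤ ∏ j ∈ range (n+1), g j := by
    intro n
    rw [Finset.prod_range_succ', Finset.prod_range_succ']
    have h0 : r0 * f 0 = g 0 := by
      rw [hr0, div_mul_cancel₀ _ (hfpos 0).ne']
    calc r0 * ((∏ j ∈ range n, f (j+1)) * f 0)
        = (∏ j ∈ range n, f (j+1)) * (r0 * f 0) := by ring
      _ ≤ (∏ j ∈ range n, g (j+1)) * (r0 * f 0) := by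
          apply mul_le_mul_of_nonneg_right
          · exact Finset.prod_le_prod (fun j _ => (hfpos _).le) (fun j _ => hfg _)
          · rw [h0]
            positivity
      _ = (∏ j ∈ range n, g (j+1)) * g 0 := by rw [h0]
  -- per-n inequality for GammaSeq products
  have hL : ∀ n : ℕ,
      Real.GammaSeq 1 n * Real.GammaSeq (2*a+1) n * Real.GammaSeq (a+s) n ^ 2 * r0
        ≤ Real.GammaSeq s n * Real.GammaSeq (2*a+s) n * Real.GammaSeq (a+1) n ^ 2 := by
    intro n
    have hD : ∀ x : ℝ, 0 < x → (0:ℝ) < ∏ j ∈ range (n+1), (x + (j:ℝ)) := by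
      intro x hx
      exact Finset.prod_pos fun j _ => by positivity
    have hPf_eq : ∏ j ∈ range (n+1), f j
        = (∏ j ∈ range (n+1), (s + (j:ℝ))) * (∏ j ∈ range (n+1), (2*a+s + (j:ℝ)))
          * (∏ j ∈ range (n+1), (a+1 + (j:ℝ))) ^ 2 := by
      simp only [hf]
      rw [Finset.prod_mul_distrib, Finset.prod_mul_distrib, Finset.prod_pow]
    have hPg_eq : ∏ j ∈ range (n+1), g j
        = (∏ j ∈ range (n+1), (1 + (j:ℝ))) * (∏ j ∈ range (n+1), (2*a+1 + (j:ℝ)))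
          * (∏ j ∈ range (n+1), (a+s + (j:ℝ))) ^ 2 := by
      simp only [hg]
      rw [Finset.prod_mul_distrib, Finset.prod_mul_distrib, Finset.prod_pow]
    have hnum : (n:ℝ)^s * (n:ℝ)^(2*a+s) * ((n:ℝ)^(a+1))^2
        = (n:ℝ)^(1:ℝ) * (n:ℝ)^(2*a+1) * ((n:ℝ)^(a+s))^2 := by
      rcases Nat.eq_zero_or_pos n with rfl | hn
      · rw [Nat.cast_zero, Real.zero_rpow (by linarith : s ≠ 0),
          Real.zero_rpow (one_ne_zero)]
        ring
      · have hn' : (0:ℝ) < n := by exact_mod_cast hn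
        rw [sq, sq, ← Real.rpow_add hn', ← Real.rpow_add hn', ← Real.rpow_add hn',
          ← Real.rpow_add hn', ← Real.rpow_add hn', ← Real.rpow_add hn']
        congr 1
        ring
    set N : ℝ := (n:ℝ)^s * (n:ℝ)^(2*a+s) * ((n:ℝ)^(a+1))^2 * (n.factorial:ℝ)^4 with hN
    have hLs : Real.GammaSeq s n * Real.GammaSeq (2*a+s) n * Real.GammaSeq (a+1) n ^ 2
        = N / ∏ j ∈ range (n+1), f j := by
      rw [hPf_eq]
      simp only [Real.GammaSeq]
      rw [div_pow, div_mul_div_comm, div_mul_div_comm]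
      congr 1
      rw [hN]; ring
    have hRs : Real.GammaSeq 1 n * Real.GammaSeq (2*a+1) n * Real.GammaSeq (a+s) n ^ 2
        = N / ∏ j ∈ range (n+1), g j := by
      rw [hPg_eq]
      simp only [Real.GammaSeq]
      rw [div_pow, div_mul_div_comm, div_mul_div_comm]
      congr 1
      rw [hN]
      linear_combination (- ((n.factorial:ℝ))^4) * hnum
    have hPfpos : 0 < ∏ j ∈ range (n+1), f j := Finset.prod_pos fun j _ => hfpos j
    have hgpos : ∀ j : ℕ, 0 < g j := fun j => lt_of_lt_of_le (hfpos j) (hfg j)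
    have hPgpos : 0 < ∏ j ∈ range (n+1), g j := Finset.prod_pos fun j _ => hgpos j
    have hNpos : 0 ≤ N := by rw [hN]; positivity
    rw [hLs, hRs, div_mul_eq_mul_div, div_le_div_iff₀ hPgpos hPfpos]
    calc N * r0 * ∏ j ∈ range (n+1), f j = N * (r0 * ∏ j ∈ range (n+1), f j) := by ring
      _ ≤ N * ∏ j ∈ range (n+1), g j := mul_le_mul_of_nonneg_left (hprod n) hNpos
  -- pass to the limit
  have hTL : Filter.Tendsto
      (fun n => Real.GammaSeq s n * Real.GammaSeq (2*a+s) n * Real.GammaSeq (a+1) n ^ 2)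
      atTop (nhds (Real.Gamma s * Real.Gamma (2*a+s) * Real.Gamma (a+1) ^ 2)) :=
    ((Real.GammaSeq_tendsto_Gamma s).mul (Real.GammaSeq_tendsto_Gamma _)).mul
      ((Real.GammaSeq_tendsto_Gamma _).pow 2)
  have hTR : Filter.Tendsto
      (fun n => Real.GammaSeq 1 n * Real.GammaSeq (2*a+1) n * Real.GammaSeq (a+s) n ^ 2 * r0)
      atTop (nhds (Real.Gamma 1 * Real.Gamma (2*a+1) * Real.Gamma (a+s) ^ 2 * r0)) :=
    (((Real.GammaSeq_tendsto_Gamma 1).mul (Real.GammaSeq_tendsto_Gamma _)).mul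
      ((Real.GammaSeq_tendsto_Gamma _).pow 2)).mul_const r0
  have hle := le_of_tendsto_of_tendsto' hTR hTL hL
  rw [Real.Gamma_one, one_mul] at hle
  have hpos : 0 < Real.Gamma (2*a+1) * Real.Gamma (a+s) ^ 2 :=
    mul_pos (Real.Gamma_pos_of_pos (by linarith)) (pow_pos (Real.Gamma_pos_of_pos (by linarith)) 2)
  nlinarith [hle, hpos, hr0gt]



/-- `ν_SV < ν⋆`, i.e.
`(2^{α+2}/(d−α)) (Γ((d+α)/4)/Γ((d−α)/4))² < 2^{α−1} Γ(α/2) Γ(d/2) / Γ((d−α)/2)`. -/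
theorem stmt_9 (d : ℕ) (hd : 2 ≤ d) (α : ℝ) (hα1 : 1 < α) (hα2 : α < 2) :
    2 ^ (α + 2) / ((d : ℝ) - α) *
        (Real.Gamma (((d : ℝ) + α) / 4) / Real.Gamma (((d : ℝ) - α) / 4)) ^ 2 <
      2 ^ (α - 1) * Real.Gamma (α / 2) * Real.Gamma ((d : ℝ) / 2) /
        Real.Gamma (((d : ℝ) - α) / 2) := by
  have hd2 : (2:ℝ) ≤ (d:ℝ) := by exact_mod_cast hd
  set a : ℝ := ((d:ℝ) - α) / 4 with haa
  set s : ℝ := α / 2 with hss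
  have ha : 0 < a := by rw [haa]; linarith
  have hs0 : 0 < s := by rw [hss]; linarith
  have hs1 : s < 1 := by rw [hss]; linarith
  have e1 : ((d:ℝ) + α) / 4 = a + s := by rw [haa, hss]; ring
  have e2 : (d:ℝ) / 2 = 2 * a + s := by rw [haa, hss]; ring
  have e3 : ((d:ℝ) - α) / 2 = 2 * a := by rw [haa]; ring
  have e4 : (d:ℝ) - α = 4 * a := by rw [haa]; ring
  rw [e1, e2, e3, e4]
  -- Gamma positivity
  have hGa : 0 < Real.Gamma a := Real.Gamma_pos_of_pos ha
  have hGas : 0 < Real.Gamma (a + s) := Real.Gamma_pos_of_pos (by linarith)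
  have hG2a : 0 < Real.Gamma (2 * a) := Real.Gamma_pos_of_pos (by linarith)
  have hGs : 0 < Real.Gamma s := Real.Gamma_pos_of_pos hs0
  have hG2as : 0 < Real.Gamma (2 * a + s) := Real.Gamma_pos_of_pos (by linarith)
  -- key inequality
  have hkey := keyA a s ha hs0 hs1
  rw [Real.Gamma_add_one (by linarith : (2:ℝ) * a ≠ 0),
    Real.Gamma_add_one (by linarith : a ≠ 0)] at hkey
  -- core : 2 * Γ(a+s)^2 * Γ(2a) < a * Γ(a)^2 * (Γ s * Γ(2a+s))
  have core : 2 * Real.Gamma (a+s) ^ 2 * Real.Gamma (2*a)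
      < a * Real.Gamma a ^ 2 * (Real.Gamma s * Real.Gamma (2*a+s)) := by
    nlinarith [hkey, ha, hGa, hGas, hG2a, hGs, hG2as]
  -- powers of two
  have h2 : (2:ℝ) ^ (α + 2) = 2 ^ (α - 1) * 8 := by
    rw [show α + 2 = (α - 1) + 3 by ring, Real.rpow_add two_pos]
    norm_num
  have hp : (0:ℝ) < 2 ^ (α - 1) := Real.rpow_pos_of_pos two_pos _
  rw [h2, div_pow, div_mul_div_comm, mul_div_assoc, mul_div_assoc',
    div_lt_div_iff₀ (by positivity) hG2a]
  nlinarith [mul_lt_mul_of_pos_left core (by positivity : (0:ℝ) < 4 * 2 ^ (α - 1))]
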